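/- If k ≡ 0 (mod 4), k ≥ 4 and n ≥ k+2, then every binary 2-(n,k)-design has at least 7 blocks; and if moreover n ≥ 7k/4 + 2, then the minimum number of blocks of a binary 2-(n,k)-design is exactly 7. -/

import Mathlib

/-- A binary `t`-design with block size `k` on point set `N`: a nonempty family of
`k`-element subsets of `N` such that every `t`-element subset of `N` is contained in an
even number of blocks. -/
def IsBinaryDesignOn (t : ℕ) (N : Finset ℕ) (k : ℕ) (D : Finset (Finset ℕ)) : Prop :=
  D.Nonempty ∧ (∀ B ∈ D, B ⊆ N ∧ B.card = k) ∧
    ∀ S ⊆ N, S.card = t → Even ((D.filter fun B => S ⊆ B).card)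

/-- A binary `t`-`(n,k)`-design on the point set `{1,…,n}`. -/
def IsBinaryDesign (t n k : ℕ) (D : Finset (Finset ℕ)) : Prop :=
  IsBinaryDesignOn t (Finset.Icc 1 n) k D

/-- `d_{t,n,k}`: minimum number of blocks of a binary `t`-`(n,k)`-design. -/
noncomputable def minBlocks (t n k : ℕ) : ℕ :=
  sInf {m | ∃ D : Finset (Finset ℕ), IsBinaryDesign t n k D ∧ D.card = m}

open Finset

-- the 7 complements of Fano lines
def lines : Finset (Finset ℕ) :=
  {{4,5,6,7},{2,3,6,7},{2,3,4,5},{1,3,5,7},{1,3,4,6},{1,2,5,6},{1,2,4,7}}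

lemma lines_card : lines.card = 7 := by decide

lemma lines_sub : ∀ L ∈ lines, L ⊆ Finset.Icc 1 7 ∧ L.card = 4 := by decide

lemma lines_parity : ∀ a ∈ Finset.Icc 1 7, ∀ b ∈ Finset.Icc 1 7,
    Even ((lines.filter fun L => a ∈ L ∧ b ∈ L).card) := by decide

def Pt (q t : ℕ) : Finset ℕ := Finset.Icc (q * (t-1) + 1) (q * t)

lemma Pt_uniq {q t t' x : ℕ} (h : x ∈ Pt q t) (h' : x ∈ Pt q t') : t = t' := by
  simp only [Pt, mem_Icc] at h h'
  by_contra hne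
  rcases Nat.lt_or_ge t t' with hlt | hge
  · have : q * t ≤ q * (t' - 1) := Nat.mul_le_mul_left q (by omega)
    omega
  · have hlt : t' < t := by omega
    have : q * t' ≤ q * (t - 1) := Nat.mul_le_mul_left q (by omega)
    omega

lemma Pt_card {q t : ℕ} (ht : 1 ≤ t) : (Pt q t).card = q := by
  obtain ⟨s, rfl⟩ : ∃ s, t = s + 1 := ⟨t - 1, by omega⟩
  simp only [Pt, Nat.card_Icc, Nat.add_sub_cancel, Nat.mul_succ]
  omega

lemma Pt_sub {q t : ℕ} (ht : t ≤ 7) : Pt q t ⊆ Finset.Icc 1 (7 * q) := by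
  intro x hx
  simp only [Pt, mem_Icc] at hx ⊢
  have : q * t ≤ q * 7 := Nat.mul_le_mul_left q ht
  omega

lemma mul_mem_Pt {q t : ℕ} (hq : 1 ≤ q) (ht : 1 ≤ t) : q * t ∈ Pt q t := by
  obtain ⟨s, rfl⟩ : ∃ s, t = s + 1 := ⟨t - 1, by omega⟩
  simp only [Pt, mem_Icc, Nat.add_sub_cancel, Nat.mul_succ]
  omega

lemma Pt_type {q x : ℕ} (hq : 1 ≤ q) (hx : x ∈ Finset.Icc 1 (7 * q)) :
    ∃ t, t ∈ Finset.Icc 1 7 ∧ x ∈ Pt q t := by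
  simp only [mem_Icc] at hx
  obtain ⟨d, r, hr, hd⟩ : ∃ d r, r < q ∧ x - 1 = q * d + r :=
    ⟨(x-1)/q, (x-1)%q, Nat.mod_lt _ (by omega), (Nat.div_add_mod (x-1) q).symm⟩
  have h4 : q * (d + 1) = q * d + q := by ring
  refine ⟨d + 1, ?_, ?_⟩
  · simp only [mem_Icc]
    refine ⟨by omega, ?_⟩
    by_contra h
    have h8 : q * 7 ≤ q * d := Nat.mul_le_mul_left q (by omega)
    omega
  · simp only [Pt, mem_Icc, Nat.add_sub_cancel]
    omega

def Blk (q : ℕ) (L : Finset ℕ) : Finset ℕ := L.biUnion (Pt q)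

lemma Blk_card {q : ℕ} (hL7 : L ⊆ Finset.Icc 1 7) (hL4 : L.card = 4) :
    (Blk q L).card = 4 * q := by
  rw [Blk, card_biUnion]
  · rw [Finset.sum_congr rfl (fun t ht => Pt_card (by
      have := hL7 ht; simp [mem_Icc] at this; omega))]
    simp [hL4, mul_comm]
  · intro t ht t' ht' hne
    show Disjoint (Pt q t) (Pt q t')
    rw [Finset.disjoint_left]
    intro x hx hx'
    exact hne (Pt_uniq hx hx')

lemma Blk_sub {q : ℕ} (hL7 : L ⊆ Finset.Icc 1 7) : Blk q L ⊆ Finset.Icc 1 (7 * q) := by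
  intro x hx
  rw [Blk, mem_biUnion] at hx
  obtain ⟨t, ht, hx⟩ := hx
  exact Pt_sub (by have := hL7 ht; simp [mem_Icc] at this; omega) hx

lemma mem_Blk_iff {q t : ℕ} (hq : 1 ≤ q) (hL7 : L ⊆ Finset.Icc 1 7) (ht : t ∈ Finset.Icc 1 7) :
    t ∈ L ↔ q * t ∈ Blk q L := by
  simp only [mem_Icc] at ht
  constructor
  · intro h
    rw [Blk, mem_biUnion]
    exact ⟨t, h, mul_mem_Pt hq ht.1⟩
  · intro h
    rw [Blk, mem_biUnion] at h
    obtain ⟨t', ht', hx⟩ := h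
    rwa [Pt_uniq (mul_mem_Pt hq ht.1) hx]

lemma Blk_injOn {q : ℕ} (hq : 1 ≤ q) : ∀ L ∈ lines, ∀ L' ∈ lines, Blk q L = Blk q L' → L = L' := by
  intro L hL L' hL' h
  ext t
  by_cases ht : t ∈ Finset.Icc 1 7
  · rw [mem_Blk_iff hq (lines_sub L hL).1 ht, mem_Blk_iff hq (lines_sub L' hL').1 ht, h]
  · constructor
    · intro hmem; exact absurd ((lines_sub L hL).1 hmem) ht
    · intro hmem; exact absurd ((lines_sub L' hL').1 hmem) ht

lemma mem_Blk_type {q x : ℕ} {L : Finset ℕ} (hx : x ∈ Pt q a) :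
    x ∈ Blk q L ↔ a ∈ L := by
  rw [Blk, mem_biUnion]
  constructor
  · rintro ⟨t, ht, hxt⟩
    rwa [Pt_uniq hx hxt]
  · intro h; exact ⟨a, h, hx⟩

theorem construction (n k q : ℕ) (hq : k = 4 * q) (hq1 : 1 ≤ q) (hn : 7 * q + 2 ≤ n) :
    ∃ D : Finset (Finset ℕ), IsBinaryDesign 2 n k D ∧ D.card = 7 := by
  classical
  set D : Finset (Finset ℕ) := lines.image (Blk q) with hD
  have hsub7 : ∀ L ∈ lines, Blk q L ⊆ Finset.Icc 1 (7 * q) := fun L hL =>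
    Blk_sub (lines_sub L hL).1
  have hsubn : ∀ L ∈ lines, Blk q L ⊆ Finset.Icc 1 n := by
    intro L hL x hx
    have := hsub7 L hL hx
    simp only [mem_Icc] at this ⊢
    omega
  have hinj : Set.InjOn (Blk q) ↑lines := fun L hL L' hL' h =>
    Blk_injOn hq1 L (by exact_mod_cast hL) L' (by exact_mod_cast hL') h
  have hcard : D.card = 7 := by
    rw [hD, Finset.card_image_of_injOn hinj, lines_card]
  refine ⟨D, ⟨⟨Blk q {4,5,6,7}, Finset.mem_image_of_mem _ (by decide)⟩, ?_, ?_⟩, hcard⟩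
  · intro B hB
    rw [hD, Finset.mem_image] at hB
    obtain ⟨L, hL, rfl⟩ := hB
    exact ⟨hsubn L hL, by rw [Blk_card (lines_sub L hL).1 (lines_sub L hL).2, hq]⟩
  · intro S hSsub hScard
    obtain ⟨x, y, hxy, rfl⟩ := Finset.card_eq_two.mp hScard
    have hfilter : (D.filter fun B => {x, y} ⊆ B).card
        = (lines.filter fun L => {x, y} ⊆ Blk q L).card := by
      rw [hD]
      rw [Finset.filter_image]
      exact Finset.card_image_of_injOn (hinj.mono (fun a ha => Finset.mem_coe.mpr (Finset.mem_of_mem_filter a (Finset.mem_coe.mp ha))))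
    rw [hfilter]
    by_cases hx7 : x ∈ Finset.Icc 1 (7 * q)
    · by_cases hy7 : y ∈ Finset.Icc 1 (7 * q)
      · obtain ⟨a, ha7, hxa⟩ := Pt_type hq1 hx7
        obtain ⟨b, hb7, hyb⟩ := Pt_type hq1 hy7
        have : (lines.filter fun L => {x, y} ⊆ Blk q L)
            = lines.filter fun L => a ∈ L ∧ b ∈ L := by
          apply Finset.filter_congr
          intro L hL
          simp only [Finset.insert_subset_iff, Finset.singleton_subset_iff,
            mem_Blk_type hxa, mem_Blk_type hyb]
        rw [this]
        exact lines_parity a ha7 b hb7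
      · have : (lines.filter fun L => {x, y} ⊆ Blk q L) = ∅ := by
          rw [Finset.filter_eq_empty_iff]
          intro L hL hsub
          exact hy7 (hsub7 L hL (hsub (by simp)))
        simp [this]
    · have : (lines.filter fun L => {x, y} ⊆ Blk q L) = ∅ := by
        rw [Finset.filter_eq_empty_iff]
        intro L hL hsub
        exact hx7 (hsub7 L hL (hsub (by simp)))
      simp [this]

section LB

variable {n k : ℕ} (D : Finset (Finset ℕ))

/-- column vector of a point -/
def colv (D : Finset (Finset ℕ)) (x : ℕ) : {B // B ∈ D} → ZMod 2 :=
  fun i => if x ∈ i.1 then 1 else 0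

/-- the dot-product bilinear form on `{B // B ∈ D} → ZMod 2` -/
noncomputable def bform (D : Finset (Finset ℕ)) :
    LinearMap.BilinForm (ZMod 2) ({B // B ∈ D} → ZMod 2) :=
  LinearMap.mk₂ (ZMod 2) (fun u w => ∑ i, u i * w i)
    (fun u u' w => by simp [add_mul, Finset.sum_add_distrib])
    (fun c u w => by simp [Finset.mul_sum, mul_assoc])
    (fun u w w' => by simp [mul_add, Finset.sum_add_distrib])
    (fun c u w => by simp [Finset.mul_sum, mul_left_comm, mul_assoc])

lemma bform_apply (u w : {B // B ∈ D} → ZMod 2) :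
    bform D u w = ∑ i, u i * w i := rfl

lemma bform_symm (u w : {B // B ∈ D} → ZMod 2) : bform D u w = bform D w u := by
  simp only [bform_apply]
  exact Finset.sum_congr rfl fun i _ => mul_comm _ _

lemma bform_refl : (bform D).IsRefl := by
  intro u w h
  rw [bform_symm]; exact h

lemma bform_nondeg : (bform D).Nondegenerate := by
  refine (LinearMap.IsRefl.nondegenerate_iff_separatingLeft (bform_refl D)).mpr ?_
  intro u hu
  funext i
  have := hu (Pi.single i 1)
  rw [bform_apply] at this
  simpa [Pi.single_apply, mul_ite, Finset.sum_ite_eq'] using this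

end LB

theorem lowerBound (n k : ℕ) (hke : k % 2 = 0) (hk1 : 1 ≤ k)
    (D : Finset (Finset ℕ)) (hD : IsBinaryDesign 2 n k D) : 7 ≤ D.card := by
  classical
  obtain ⟨hne, hbl, hpair⟩ := hD
  by_contra hlt
  push_neg at hlt
  set N := Finset.Icc 1 n with hN
  -- the dot product of two columns is the (parity of the) number of blocks containing both
  have dvv : ∀ x y : ℕ, bform D (colv D x) (colv D y)
      = (((D.filter fun Bl => x ∈ Bl ∧ y ∈ Bl).card : ℕ) : ZMod 2) := by
    intro x y
    rw [bform_apply]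
    have h1 : ∀ i : {B // B ∈ D}, colv D x i * colv D y i
        = if x ∈ i.1 ∧ y ∈ i.1 then (1 : ZMod 2) else 0 := by
      intro i
      simp only [colv]
      by_cases hx : x ∈ i.1 <;> by_cases hy : y ∈ i.1 <;> simp [hx, hy]
    rw [Finset.sum_congr rfl fun i _ => h1 i]
    rw [Finset.sum_coe_sort D (fun Bl => if x ∈ Bl ∧ y ∈ Bl then (1 : ZMod 2) else 0)]
    rw [Finset.sum_boole]

  -- every point has even degree
  have hdeg : ∀ x ∈ N, Even ((D.filter fun Bl => x ∈ Bl).card) := by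
    intro x hx
    have count : ∑ y ∈ N.erase x, ((D.filter fun Bl => x ∈ Bl ∧ y ∈ Bl).card)
        = (D.filter fun Bl => x ∈ Bl).card * (k - 1) := by
      have e1 : ∀ y, ((D.filter fun Bl => x ∈ Bl ∧ y ∈ Bl).card)
          = ∑ Bl ∈ D, if x ∈ Bl ∧ y ∈ Bl then 1 else 0 := fun y => Finset.card_filter _ _
      rw [Finset.sum_congr rfl fun y _ => e1 y, Finset.sum_comm]
      have e2 : ∀ Bl ∈ D, (∑ y ∈ N.erase x, if x ∈ Bl ∧ y ∈ Bl then 1 else 0)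
          = if x ∈ Bl then k - 1 else 0 := by
        intro Bl hBl
        by_cases hxB : x ∈ Bl
        · simp only [hxB, true_and, if_true]
          have : (∑ y ∈ N.erase x, if y ∈ Bl then 1 else 0)
              = ((N.erase x).filter (fun y => y ∈ Bl)).card := (Finset.card_filter _ _).symm
          rw [this]
          have : (N.erase x).filter (fun y => y ∈ Bl) = Bl.erase x := by
            ext y
            simp only [Finset.mem_filter, Finset.mem_erase]
            constructor
            · rintro ⟨⟨hyx, _⟩, hyB⟩; exact ⟨hyx, hyB⟩
            · rintro ⟨hyx, hyB⟩; exact ⟨⟨hyx, (hbl Bl hBl).1 hyB⟩, hyB⟩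
          rw [this, Finset.card_erase_of_mem hxB, (hbl Bl hBl).2]
        · simp [hxB]
      rw [Finset.sum_congr rfl e2, Finset.sum_ite, Finset.sum_const, Finset.sum_const]
      simp [mul_comm]
    have heven : Even (∑ y ∈ N.erase x, ((D.filter fun Bl => x ∈ Bl ∧ y ∈ Bl).card)) := by
      apply Finset.even_sum
      intro y hy
      have hyN : y ∈ N := Finset.mem_of_mem_erase hy
      have hyx : y ≠ x := Finset.ne_of_mem_erase hy
      have hpxy := hpair {x, y} (by
        intro z hz
        simp only [Finset.mem_insert, Finset.mem_singleton] at hz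
        rcases hz with rfl | rfl
        exacts [hx, hyN]) (Finset.card_pair (fun h => hyx h.symm))
      have : (D.filter fun Bl => ({x, y} : Finset ℕ) ⊆ Bl)
          = D.filter fun Bl => x ∈ Bl ∧ y ∈ Bl := by
        apply Finset.filter_congr
        intro Bl _
        simp [Finset.insert_subset_iff]
      rwa [this] at hpxy
    rw [count] at heven
    rcases Nat.even_mul.mp heven with h | h
    · exact h
    · exfalso
      rw [Nat.even_iff] at h
      omega
  -- columns are pairwise orthogonal (including with themselves)
  have hvv0 : ∀ x y : ℕ, bform D (colv D x) (colv D y) = 0 := by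
    intro x y
    by_cases hx : x ∈ N
    · by_cases hy : y ∈ N
      · rcases eq_or_ne x y with rfl | hxy
        · rw [dvv]
          have : (D.filter fun Bl => x ∈ Bl ∧ x ∈ Bl) = D.filter fun Bl => x ∈ Bl := by
            apply Finset.filter_congr; intro Bl _; simp
          rw [this]
          obtain ⟨r, hr⟩ := hdeg x hx
          rw [hr]
          push_cast
          exact CharTwo.add_self_eq_zero _
        · rw [dvv]
          have hpxy := hpair {x, y} (by
            intro z hz
            simp only [Finset.mem_insert, Finset.mem_singleton] at hz
            rcases hz with rfl | rfl
            exacts [hx, hy]) (Finset.card_pair hxy)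
          have : (D.filter fun Bl => ({x, y} : Finset ℕ) ⊆ Bl)
              = D.filter fun Bl => x ∈ Bl ∧ y ∈ Bl := by
            apply Finset.filter_congr
            intro Bl _
            simp [Finset.insert_subset_iff]
          rw [this] at hpxy
          obtain ⟨r, hr⟩ := hpxy
          rw [hr]
          push_cast
          exact CharTwo.add_self_eq_zero _
      · have : colv D y = 0 := by
          funext i
          simp only [colv, Pi.zero_apply, ite_eq_right_iff]
          intro hyB
          exact absurd ((hbl i.1 i.2).1 hyB) hy
        rw [this, map_zero]
    · have : colv D x = 0 := by
        funext i
        simp only [colv, Pi.zero_apply, ite_eq_right_iff]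
        intro hxB
        exact absurd ((hbl i.1 i.2).1 hxB) hx
      rw [this, LinearMap.map_zero₂]
  obtain ⟨W, hW⟩ : ∃ W : Submodule (ZMod 2) ({B // B ∈ D} → ZMod 2),
      W = Submodule.span (ZMod 2) (Set.range (colv D)) := ⟨_, rfl⟩
  have hvW : ∀ x : ℕ, colv D x ∈ W := fun x => by
    rw [hW]; exact Submodule.subset_span ⟨x, rfl⟩
  -- any totally isotropic subspace U satisfies 2 * finrank U ≤ D.card
  have hVrank : Module.finrank (ZMod 2) ({B // B ∈ D} → ZMod 2) = D.card := by
    rw [Module.finrank_pi]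
    exact Fintype.card_coe D
  have key : ∀ U : Submodule (ZMod 2) ({B // B ∈ D} → ZMod 2),
      (∀ u ∈ U, ∀ w ∈ U, bform D u w = 0) → 2 * Module.finrank (ZMod 2) U ≤ D.card := by
    intro U hU
    have hle : U ≤ (bform D).orthogonal U := by
      intro u hu
      rw [LinearMap.BilinForm.mem_orthogonal_iff]
      intro w hw
      exact hU w hw u hu
    have h1 := LinearMap.BilinForm.finrank_orthogonal (bform_nondeg D) U
    have h2 : Module.finrank (ZMod 2) U
        ≤ Module.finrank (ZMod 2) ((bform D).orthogonal U) := Submodule.finrank_mono hle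
    have h3 : Module.finrank (ZMod 2) U
        ≤ Module.finrank (ZMod 2) ({B // B ∈ D} → ZMod 2) := U.finrank_le
    omega
  -- W is totally isotropic
  have hiso : ∀ u ∈ W, ∀ w ∈ W, bform D u w = 0 := by
    intro u hu w hw
    rw [hW] at hu hw
    induction hu, hw using Submodule.span_induction₂ with
    | mem_mem u w hu hw =>
      obtain ⟨x, rfl⟩ := hu
      obtain ⟨y, rfl⟩ := hw
      exact hvv0 x y
    | zero_left w hw => rw [LinearMap.map_zero₂]
    | zero_right u hu => rw [map_zero]
    | add_left u₁ u₂ w h1 h2 h3 ih1 ih2 =>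
      rw [LinearMap.map_add₂, ih1, ih2, add_zero]
    | add_right u w₁ w₂ h1 h2 h3 ih1 ih2 =>
      rw [map_add, ih1, ih2, add_zero]
    | smul_left c u w h1 h2 ih =>
      rw [LinearMap.map_smul₂, ih, smul_zero]
    | smul_right c u w h1 h2 ih =>
      rw [map_smul, ih, smul_zero]
  -- blocks agreeing on all columns are equal
  have hblk_eq : ∀ i j : {B // B ∈ D}, (∀ t : ℕ, colv D t i = colv D t j) → i = j := by
    intro i j h
    apply Subtype.ext
    ext t
    have := h t
    simp only [colv] at this
    by_cases hti : t ∈ i.1 <;> by_cases htj : t ∈ j.1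
    · exact iff_of_true hti htj
    · rw [if_pos hti, if_neg htj] at this; exact absurd this one_ne_zero
    · rw [if_pos htj, if_neg hti] at this; exact absurd this.symm one_ne_zero
    · exact iff_of_false hti htj
  -- the number of blocks is less than 2 ^ finrank W
  have hcard : D.card < 2 ^ Module.finrank (ZMod 2) W := by
    haveI : Finite ↥W := Subtype.finite
    haveI hWfin : Fintype ↥W := Fintype.ofFinite _
    haveI : Finite (Module.Dual (ZMod 2) ↥W) :=
      Finite.of_injective (fun f => (f : ↥W → ZMod 2)) DFunLike.coe_injective
    haveI hDualFin : Fintype (Module.Dual (ZMod 2) ↥W) := Fintype.ofFinite _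
    set ψ : {B // B ∈ D} → Module.Dual (ZMod 2) ↥W :=
      fun i => (LinearMap.proj i).comp W.subtype with hψ
    have hψapp : ∀ (i : {B // B ∈ D}) (w : ↥W), ψ i w = w.1 i := fun i w => rfl
    have hψinj : Function.Injective ψ := by
      intro i j h
      apply hblk_eq
      intro t
      have := congrArg (fun f => f ⟨colv D t, hvW t⟩) h
      simpa [hψapp] using this
    have hψne : ∀ i, ψ i ≠ 0 := by
      intro i h0
      obtain ⟨t, ht⟩ := Finset.card_pos.mp (by rw [(hbl i.1 i.2).2]; omega)
      have := congrArg (fun f => f ⟨colv D t, hvW t⟩) h0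
      simp only [hψapp] at this
      rw [show colv D t i = 1 by simp [colv, ht]] at this
      exact one_ne_zero this
    have hinj2 : Function.Injective
        (fun i : {B // B ∈ D} => (⟨ψ i, hψne i⟩ : {f : Module.Dual (ZMod 2) ↥W // f ≠ 0})) := by
      intro i j h
      exact hψinj (congrArg Subtype.val h)
    have hle := Fintype.card_le_of_injective _ hinj2
    have h1 : Fintype.card {B // B ∈ D} = D.card := Fintype.card_coe D
    have h2 : Fintype.card {f : Module.Dual (ZMod 2) ↥W // f ≠ 0}
        = Fintype.card (Module.Dual (ZMod 2) ↥W) - 1 := by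
      rw [Fintype.card_subtype_compl, Fintype.card_subtype_eq]
    have h4 : Module.finrank (ZMod 2) (Module.Dual (ZMod 2) ↥W)
        = Module.finrank (ZMod 2) ↥W := Subspace.dual_finrank_eq
    have h3 : Fintype.card (Module.Dual (ZMod 2) ↥W)
        = 2 ^ Module.finrank (ZMod 2) ↥W := by
      have := Module.card_eq_pow_finrank (K := ZMod 2) (V := Module.Dual (ZMod 2) ↥W)
      rwa [ZMod.card, h4] at this
    have hpow : 1 ≤ 2 ^ Module.finrank (ZMod 2) ↥W := Nat.one_le_two_pow
    omega
  -- numerics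
  have hm1 : 1 ≤ D.card := Finset.card_pos.mpr hne
  have h2d := key W hiso
  obtain ⟨d, hdd⟩ : ∃ d, Module.finrank (ZMod 2) ↥W = d := ⟨_, rfl⟩
  rw [hdd] at hcard h2d
  have hdle : d ≤ 3 := by omega
  have hd3 : d = 3 ∧ D.card = 6 := by
    interval_cases d <;> omega
  have hm6 : D.card = 6 := hd3.2
  -- the all-ones vector
  set u1 : {B // B ∈ D} → ZMod 2 := fun _ => (1 : ZMod 2) with hu1
  have hcardι : Fintype.card {B // B ∈ D} = 6 := by rw [Fintype.card_coe]; exact hm6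
  have hu1u1 : bform D u1 u1 = 0 := by
    rw [bform_apply]
    have e : ∀ i : {B // B ∈ D}, u1 i * u1 i = 1 := fun i => by simp [hu1]
    rw [Finset.sum_congr rfl fun i _ => e i, Finset.sum_const, Finset.card_univ, hcardι]
    decide
  have hvu1 : ∀ x : ℕ, bform D (colv D x) u1 = 0 := by
    intro x
    have e : bform D (colv D x) u1 = bform D (colv D x) (colv D x) := by
      rw [bform_apply, bform_apply]
      apply Finset.sum_congr rfl
      intro i _
      simp only [colv, hu1]
      by_cases hx : x ∈ i.1 <;> simp [hx]
    rw [e, hvv0]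
  have hu1w : ∀ w ∈ W, bform D w u1 = 0 := by
    intro w hw
    rw [hW] at hw
    induction hw using Submodule.span_induction with
    | mem w hmem => obtain ⟨x, rfl⟩ := hmem; exact hvu1 x
    | zero => rw [LinearMap.map_zero₂]
    | add a b ha hb iha ihb => rw [LinearMap.map_add₂, iha, ihb, add_zero]
    | smul c a ha iha => rw [LinearMap.map_smul₂, iha, smul_zero]
  -- u1 lies in W
  have hu1W : u1 ∈ W := by
    have hsup : ∀ u ∈ W ⊔ Submodule.span (ZMod 2) {u1},
        ∀ w ∈ W ⊔ Submodule.span (ZMod 2) {u1}, bform D u w = 0 := by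
      intro u hu w hw
      rw [Submodule.mem_sup] at hu hw
      obtain ⟨a, ha, b, hb, rfl⟩ := hu
      obtain ⟨a', ha', b', hb', rfl⟩ := hw
      rw [Submodule.mem_span_singleton] at hb hb'
      obtain ⟨c, rfl⟩ := hb
      obtain ⟨c', rfl⟩ := hb'
      have z1 : bform D a a' = 0 := hiso a ha a' ha'
      have z2 : bform D a u1 = 0 := hu1w a ha
      have z3 : bform D u1 a' = 0 := by rw [bform_symm]; exact hu1w a' ha'
      simp [LinearMap.map_add₂, LinearMap.map_smul₂, z1, z2, z3, hu1u1]
    have hsk := key _ hsup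
    have hWle : W ≤ W ⊔ Submodule.span (ZMod 2) {u1} := le_sup_left
    have hfr : Module.finrank (ZMod 2) ↥(W ⊔ Submodule.span (ZMod 2) {u1})
        ≤ Module.finrank (ZMod 2) ↥W := by omega
    have heq := Submodule.eq_of_le_of_finrank_le hWle hfr
    rw [heq]
    exact Submodule.mem_sup_right (Submodule.mem_span_singleton_self u1)
  -- pick an element of W other than 0 and u1
  have hu1ne : u1 ≠ 0 := by
    obtain ⟨B0, hB0⟩ := hne
    intro h
    have := congrFun h ⟨B0, hB0⟩
    exact one_ne_zero this
  have hex : ∃ w ∈ W, w ≠ 0 ∧ w ≠ u1 := by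
    by_contra hno
    push_neg at hno
    have hle : W ≤ Submodule.span (ZMod 2) {u1} := by
      intro w hw
      rcases eq_or_ne w 0 with rfl | h0
      · exact Submodule.zero_mem _
      · rw [hno w hw h0]; exact Submodule.mem_span_singleton_self u1
    have h1 := Submodule.finrank_mono (R := ZMod 2) hle
    rw [hdd, finrank_span_singleton hu1ne] at h1
    omega
  obtain ⟨w, hwW, hw0, hwu1⟩ := hex
  have hz2 : ∀ z : ZMod 2, z = 0 ∨ z = 1 := by decide
  -- weight of w
  obtain ⟨wc, hwc⟩ : ∃ c, (Finset.univ.filter (fun i => w i = 1)).card = c := ⟨_, rfl⟩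
  have hwt_cast : ((wc : ℕ) : ZMod 2) = 0 := by
    have hww := hiso w hwW w hwW
    rw [bform_apply] at hww
    have e : ∀ i : {B // B ∈ D}, w i * w i = if w i = 1 then (1 : ZMod 2) else 0 := by
      intro i; rcases hz2 (w i) with h | h <;> rw [h] <;> simp
    rw [Finset.sum_congr rfl fun i _ => e i, Finset.sum_boole, hwc] at hww
    exact hww
  have hwt_even : wc % 2 = 0 := by
    have := (ZMod.natCast_eq_zero_iff wc 2).mp hwt_cast
    omega
  have hwt_le : wc ≤ 6 := by
    rw [← hwc, ← hcardι, ← Finset.card_univ]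
    exact Finset.card_filter_le _ _
  have hwt_ne0 : wc ≠ 0 := by
    intro h
    apply hw0
    funext i
    have hempty : (Finset.univ.filter (fun i => w i = 1)) = ∅ :=
      Finset.card_eq_zero.mp (by rw [hwc]; exact h)
    have hi : i ∉ Finset.univ.filter (fun i => w i = 1) := by
      rw [hempty]; exact Finset.notMem_empty i
    simp only [Finset.mem_filter, Finset.mem_univ, true_and] at hi
    rcases hz2 (w i) with h' | h'
    · exact h'
    · exact absurd h' hi
  have hwt_ne6 : wc ≠ 6 := by
    intro h
    apply hwu1
    funext i
    have huniv : (Finset.univ.filter (fun i => w i = 1)) = Finset.univ :=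
      Finset.eq_univ_of_card _ (by rw [hwc, h, hcardι])
    have : i ∈ Finset.univ.filter (fun i => w i = 1) := by
      rw [huniv]; exact Finset.mem_univ i
    simp only [Finset.mem_filter] at this
    exact this.2
  -- produce an element of weight two
  obtain ⟨w2, hw2W, hw2c⟩ : ∃ w2 ∈ W, (Finset.univ.filter (fun i => w2 i = 1)).card = 2 := by
    rcases (by omega : wc = 2 ∨ wc = 4) with h2 | h4
    · exact ⟨w, hwW, by rw [hwc, h2]⟩
    · refine ⟨w + u1, W.add_mem hwW hu1W, ?_⟩
      have e : Finset.univ.filter (fun i => (w + u1) i = 1)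
          = Finset.univ.filter (fun i => ¬ (w i = 1)) := by
        apply Finset.filter_congr
        intro i _
        rcases hz2 (w i) with h | h <;> simp [Pi.add_apply, hu1, h] <;> decide
      have hsplit := Finset.card_filter_add_card_filter_not
        (s := Finset.univ) (p := fun i : {B // B ∈ D} => w i = 1)
      rw [Finset.card_univ, hcardι, hwc] at hsplit
      rw [e]
      omega
  obtain ⟨i, j, hij, hset⟩ := Finset.card_eq_two.mp hw2c
  have hcols : ∀ x : ℕ, colv D x i = colv D x j := by
    intro x
    have h0 := hiso (colv D x) (hvW x) w2 hw2W
    rw [bform_apply] at h0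
    have e : ∀ i' : {B // B ∈ D}, colv D x i' * w2 i'
        = if w2 i' = 1 then colv D x i' else 0 := by
      intro i'; rcases hz2 (w2 i') with h | h <;> rw [h] <;> simp
    rw [Finset.sum_congr rfl fun i' _ => e i', ← Finset.sum_filter, hset,
      Finset.sum_pair hij] at h0
    have hadd : ∀ a b : ZMod 2, a + b = 0 → a = b := by decide
    exact hadd _ _ h0
  exact hij (hblk_eq i j hcols)

theorem stmt17 (n k : ℕ) (hk : k % 4 = 0) (hk4 : 4 ≤ k) (hn : k + 2 ≤ n) :
    (∀ D : Finset (Finset ℕ), IsBinaryDesign 2 n k D → 7 ≤ D.card) ∧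
      (7 * k / 4 + 2 ≤ n → minBlocks 2 n k = 7) := by
  have hlow : ∀ D : Finset (Finset ℕ), IsBinaryDesign 2 n k D → 7 ≤ D.card :=
    fun D hD => lowerBound n k (by omega) (by omega) D hD
  refine ⟨hlow, ?_⟩
  intro hn2
  obtain ⟨q, hq⟩ : ∃ q, k = 4 * q := ⟨k / 4, by omega⟩
  have hq1 : 1 ≤ q := by omega
  have hn7 : 7 * q + 2 ≤ n := by omega
  obtain ⟨D, hD, hDc⟩ := construction n k q hq hq1 hn7
  have h7mem : 7 ∈ {m | ∃ D : Finset (Finset ℕ), IsBinaryDesign 2 n k D ∧ D.card = m} :=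
    ⟨D, hD, hDc⟩
  have hle : minBlocks 2 n k ≤ 7 := Nat.sInf_le h7mem
  have hge : 7 ≤ minBlocks 2 n k := by
    obtain ⟨D', hD', hc'⟩ := Nat.sInf_mem (⟨7, h7mem⟩ :
      Set.Nonempty {m | ∃ D : Finset (Finset ℕ), IsBinaryDesign 2 n k D ∧ D.card = m})
    rw [minBlocks, ← hc']
    exact hlow D' hD'
  omega
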